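/- Fix real numbers t0 < t1 and 0 ≤ x_min < x_max. Let ψ : [t0,t1] × [x_min,x_max] → ℝ be C⁴ and satisfy ∂_t ψ(t,x) + ∂_x ψ(t,x) = 0 for all (t,x), with boundary values ψ(t, x_min) = u(t) and ψ(t, x_max) = 0 for all t ∈ [t0,t1], where u is C³. Define y(t) = ∫_{x_min}^{x_max} x³ ψ(t,x) dx. Then y is four times differentiable on [t0,t1] and y⁗(t) = 6 u(t) + 6 x_min u′(t) + 3 x_min² u″(t) + x_min³ u‴(t) for all t ∈ [t0,t1]. -/

import Mathlib

set_option autoImplicit false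
set_option maxHeartbeats 1000000

open Set intervalIntegral

theorem char_const (t0 t1 xmin xmax : ℝ) (ht : t0 < t1) (hx : xmin < xmax)
    (ψ : ℝ → ℝ → ℝ)
    (hC : ContDiffOn ℝ 4 (fun p : ℝ × ℝ => ψ p.1 p.2) (Set.Icc t0 t1 ×ˢ Set.Icc xmin xmax))
    (hPDE : ∀ t ∈ Set.Icc t0 t1, ∀ x ∈ Set.Icc xmin xmax,
      derivWithin (fun s => ψ s x) (Set.Icc t0 t1) t
        + derivWithin (fun ξ => ψ t ξ) (Set.Icc xmin xmax) x = 0) :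
    ∀ t ∈ Set.Icc t0 t1, ∀ x ∈ Set.Icc xmin xmax, ∀ t' ∈ Set.Icc t0 t1,
      ∀ x' ∈ Set.Icc xmin xmax, t - x = t' - x' → ψ t x = ψ t' x' := by
  have hFd : DifferentiableOn ℝ (fun p : ℝ × ℝ => ψ p.1 p.2)
      (Set.Icc t0 t1 ×ˢ Set.Icc xmin xmax) := hC.differentiableOn (by norm_num)
  intro t htm x hxm t' htm' x' hxm' hc
  set c := t - x with hcdef
  set S : Set ℝ := Set.Icc xmin xmax ∩ Set.Icc (t0 - c) (t1 - c) with hS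
  have hSconv : Convex ℝ S := (convex_Icc _ _).inter (convex_Icc _ _)
  have hmem : ∀ ξ ∈ S, ((c + ξ, ξ) : ℝ × ℝ) ∈ Set.Icc t0 t1 ×ˢ Set.Icc xmin xmax := by
    intro ξ hξ
    have h1 := hξ.2.1
    have h2 := hξ.2.2
    refine ⟨⟨?_, ?_⟩, hξ.1⟩
    · show t0 ≤ c + ξ; linarith
    · show c + ξ ≤ t1; linarith
  have hderiv : ∀ ξ ∈ S, HasDerivWithinAt (fun ξ => ψ (c + ξ) ξ) 0 S ξ := by
    intro ξ hξ
    have hp := hmem ξ hξ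
    have hdF : HasFDerivWithinAt (fun p : ℝ × ℝ => ψ p.1 p.2)
        (fderivWithin ℝ (fun p : ℝ × ℝ => ψ p.1 p.2)
          (Set.Icc t0 t1 ×ˢ Set.Icc xmin xmax) (c + ξ, ξ))
        (Set.Icc t0 t1 ×ˢ Set.Icc xmin xmax) (c + ξ, ξ) :=
      (hFd _ hp).hasFDerivWithinAt
    set f' := fderivWithin ℝ (fun p : ℝ × ℝ => ψ p.1 p.2)
        (Set.Icc t0 t1 ×ˢ Set.Icc xmin xmax) (c + ξ, ξ) with hf'
    have hline1 : HasDerivWithinAt (fun s : ℝ => ((s, ξ) : ℝ × ℝ)) ((1 : ℝ), (0 : ℝ))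
        (Set.Icc t0 t1) (c + ξ) :=
      ((hasDerivAt_id _).prodMk (hasDerivAt_const _ _)).hasDerivWithinAt
    have hmaps1 : Set.MapsTo (fun s : ℝ => ((s, ξ) : ℝ × ℝ)) (Set.Icc t0 t1)
        (Set.Icc t0 t1 ×ˢ Set.Icc xmin xmax) := fun s hs => ⟨hs, hξ.1⟩
    have ht1 : HasDerivWithinAt (fun s => ψ s ξ) (f' (1, 0)) (Set.Icc t0 t1) (c + ξ) :=
      hdF.comp_hasDerivWithinAt_of_eq _ hline1 hmaps1 rfl
    have hline2 : HasDerivWithinAt (fun z : ℝ => ((c + ξ, z) : ℝ × ℝ)) ((0 : ℝ), (1 : ℝ))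
        (Set.Icc xmin xmax) ξ :=
      ((hasDerivAt_const _ _).prodMk (hasDerivAt_id _)).hasDerivWithinAt
    have hmaps2 : Set.MapsTo (fun z : ℝ => ((c + ξ, z) : ℝ × ℝ)) (Set.Icc xmin xmax)
        (Set.Icc t0 t1 ×ˢ Set.Icc xmin xmax) := fun z hz => ⟨hp.1, hz⟩
    have ht2 : HasDerivWithinAt (fun z => ψ (c + ξ) z) (f' (0, 1)) (Set.Icc xmin xmax) ξ :=
      hdF.comp_hasDerivWithinAt_of_eq _ hline2 hmaps2 rfl
    have e1 : derivWithin (fun s => ψ s ξ) (Set.Icc t0 t1) (c + ξ) = f' (1, 0) :=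
      ht1.derivWithin (uniqueDiffOn_Icc ht _ hp.1)
    have e2 : derivWithin (fun z => ψ (c + ξ) z) (Set.Icc xmin xmax) ξ = f' (0, 1) :=
      ht2.derivWithin (uniqueDiffOn_Icc hx _ hp.2)
    have hzero : f' (1, 0) + f' (0, 1) = 0 := by
      rw [← e1, ← e2]; exact hPDE _ hp.1 _ hp.2
    have h11 : f' ((1 : ℝ), (1 : ℝ)) = 0 := by
      have heq : ((1 : ℝ), (1 : ℝ)) = ((1 : ℝ), (0 : ℝ)) + ((0 : ℝ), (1 : ℝ)) := by
        norm_num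
      rw [heq, map_add]; exact hzero
    have hlineξ : HasDerivAt (fun z : ℝ => ((c + z, z) : ℝ × ℝ)) ((1 : ℝ), (1 : ℝ)) ξ :=
      ((hasDerivAt_id ξ).const_add c).prodMk (hasDerivAt_id ξ)
    have hmapsξ : Set.MapsTo (fun z : ℝ => ((c + z, z) : ℝ × ℝ)) S
        (Set.Icc t0 t1 ×ˢ Set.Icc xmin xmax) := fun z hz => hmem z hz
    have hcomp : HasDerivWithinAt (fun z => ψ (c + z) z) (f' (1, 1)) S ξ :=
      hdF.comp_hasDerivWithinAt_of_eq _ hlineξ.hasDerivWithinAt hmapsξ rfl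
    rw [h11] at hcomp
    exact hcomp
  have hxS : x ∈ S := by
    have h1 : t0 - c ≤ x := by rw [hcdef]; linarith [htm.1]
    have h2 : x ≤ t1 - c := by rw [hcdef]; linarith [htm.2]
    exact ⟨hxm, h1, h2⟩
  have hx'S : x' ∈ S := by
    have h1 : t0 - c ≤ x' := by rw [hc]; linarith [htm'.1]
    have h2 : x' ≤ t1 - c := by rw [hc]; linarith [htm'.2]
    exact ⟨hxm', h1, h2⟩
  have hb := Convex.norm_image_sub_le_of_norm_hasDerivWithin_le (C := 0)
    (f' := fun _ => (0 : ℝ)) hderiv (fun ξ hξ => by simp) hSconv hxS hx'S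
  simp only [zero_mul, norm_le_zero_iff, sub_eq_zero] at hb
  have e : c + x = t := by rw [hcdef]; ring
  have e' : c + x' = t' := by rw [hc]; ring
  rw [← e, ← e']
  exact hb.symm

/-- Fourth derivative identity for the third-moment output of the unit-speed transport
equation `∂ₜψ + ∂ₓψ = 0` with `ψ(t, xmax) = 0`:
`y''''(t) = 6 u(t) + 6 xmin u'(t) + 3 xmin² u''(t) + xmin³ u'''(t)`
where `u(t) = ψ(t, xmin)`. -/
theorem stmt8 (t0 t1 xmin xmax : ℝ) (ht : t0 < t1) (hx0 : 0 ≤ xmin) (hx : xmin < xmax)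
    (ψ : ℝ → ℝ → ℝ) (u : ℝ → ℝ)
    (hC : ContDiffOn ℝ 4 (fun p : ℝ × ℝ => ψ p.1 p.2) (Set.Icc t0 t1 ×ˢ Set.Icc xmin xmax))
    (hu : ContDiffOn ℝ 3 u (Set.Icc t0 t1))
    (hPDE : ∀ t ∈ Set.Icc t0 t1, ∀ x ∈ Set.Icc xmin xmax,
      derivWithin (fun s => ψ s x) (Set.Icc t0 t1) t
        + derivWithin (fun ξ => ψ t ξ) (Set.Icc xmin xmax) x = 0)
    (hbmin : ∀ t ∈ Set.Icc t0 t1, ψ t xmin = u t)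
    (hbmax : ∀ t ∈ Set.Icc t0 t1, ψ t xmax = 0) :
    ∃ y1 y2 y3 : ℝ → ℝ,
      (∀ t ∈ Set.Icc t0 t1,
        HasDerivWithinAt (fun s => ∫ x in xmin..xmax, x ^ 3 * ψ s x) (y1 t)
          (Set.Icc t0 t1) t) ∧
      (∀ t ∈ Set.Icc t0 t1, HasDerivWithinAt y1 (y2 t) (Set.Icc t0 t1) t) ∧
      (∀ t ∈ Set.Icc t0 t1, HasDerivWithinAt y2 (y3 t) (Set.Icc t0 t1) t) ∧
      (∀ t ∈ Set.Icc t0 t1,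
        HasDerivWithinAt y3
          (6 * u t + 6 * xmin * derivWithin u (Set.Icc t0 t1) t
            + 3 * xmin ^ 2 * derivWithin (derivWithin u (Set.Icc t0 t1)) (Set.Icc t0 t1) t
            + xmin ^ 3 * derivWithin (derivWithin (derivWithin u (Set.Icc t0 t1))
                (Set.Icc t0 t1)) (Set.Icc t0 t1) t)
          (Set.Icc t0 t1) t) := by
  have key := char_const t0 t1 xmin xmax ht hx ψ hC hPDE
  -- the transported boundary function along characteristics
  set xc : ℝ → ℝ := fun c => min xmax (max xmin (t0 - c)) with hxc
  set tc : ℝ → ℝ := fun c => min t1 (max t0 (c + xc c)) with htc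
  set Φ : ℝ → ℝ := fun c => ψ (tc c) (xc c) with hΦdef
  have hxcmem : ∀ c, xc c ∈ Set.Icc xmin xmax :=
    fun c => ⟨le_min hx.le (le_max_left _ _), min_le_left _ _⟩
  have htcmem : ∀ c, tc c ∈ Set.Icc t0 t1 :=
    fun c => ⟨le_min ht.le (le_max_left _ _), min_le_left _ _⟩
  have hcont : Continuous Φ := by
    have hpair : Continuous (fun c => ((tc c, xc c) : ℝ × ℝ)) := by fun_prop
    exact hC.continuousOn.comp_continuous hpair (fun c => ⟨htcmem c, hxcmem c⟩)
  have hΦ : ∀ t ∈ Set.Icc t0 t1, ∀ x ∈ Set.Icc xmin xmax, Φ (t - x) = ψ t x := by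
    intro t htm x hxm
    set c := t - x with hcdef
    have hc1 : t0 - xmax ≤ c := by rw [hcdef]; linarith [htm.1, hxm.2]
    have hc2 : c ≤ t1 - xmin := by rw [hcdef]; linarith [htm.2, hxm.1]
    have hxl : t0 - c ≤ xc c := le_min (by linarith) (le_max_right _ _)
    have hxu : xc c ≤ t1 - c :=
      le_trans (min_le_right _ _) (max_le (by linarith) (by linarith))
    have htceq : tc c = c + xc c := by
      rw [htc]
      simp only
      rw [max_eq_right (by linarith), min_eq_right (by linarith)]
    have hch : tc c - xc c = t - x := by rw [htceq, hcdef]; ring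
    exact key (tc c) (htcmem c) (xc c) (hxcmem c) t htm x hxm hch
  have hΦmin : ∀ t ∈ Set.Icc t0 t1, Φ (t - xmin) = u t := fun t htm =>
    (hΦ t htm xmin ⟨le_refl _, hx.le⟩).trans (hbmin t htm)
  have hΦmax : ∀ t ∈ Set.Icc t0 t1, Φ (t - xmax) = 0 := fun t htm =>
    (hΦ t htm xmax ⟨hx.le, le_refl _⟩).trans (hbmax t htm)
  -- moment antiderivatives
  set g : ℕ → ℝ → ℝ := fun j s => s ^ j * Φ s with hgdef
  have hgc : ∀ j, Continuous (g j) := fun j => (continuous_pow j).mul hcont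
  set G : ℕ → ℝ → ℝ := fun j a => ∫ s in (t0 - xmax)..a, g j s with hGdef
  have hG : ∀ j a, HasDerivAt (G j) (g j a) a := fun j a =>
    ((hgc j).integral_hasStrictDerivAt _ a).hasDerivAt
  set A : ℕ → ℝ → ℝ := fun j t => G j (t - xmin) - G j (t - xmax) with hAdef
  have hA : ∀ j, ∀ t ∈ Set.Icc t0 t1, HasDerivAt (A j) ((t - xmin) ^ j * u t) t := by
    intro j t htm
    have h1 : HasDerivAt (fun t : ℝ => G j (t - xmin)) (g j (t - xmin)) t := by
      have := (hG j (t - xmin)).comp t ((hasDerivAt_id t).sub_const xmin)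
      exact HasDerivAt.comp_sub_const t xmin (hG j (t - xmin))
    have h2 : HasDerivAt (fun t : ℝ => G j (t - xmax)) (g j (t - xmax)) t := by
      have := (hG j (t - xmax)).comp t ((hasDerivAt_id t).sub_const xmax)
      exact HasDerivAt.comp_sub_const t xmax (hG j (t - xmax))
    have h3 := h1.sub h2
    have e : g j (t - xmin) - g j (t - xmax) = (t - xmin) ^ j * u t := by
      rw [hgdef]
      simp only
      rw [hΦmin t htm, hΦmax t htm, mul_zero, sub_zero]
    rw [e] at h3
    exact h3
  have hAint : ∀ j (t : ℝ), A j t = ∫ s in (t - xmax)..(t - xmin), g j s := by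
    intro j t
    show G j (t - xmin) - G j (t - xmax) = _
    simp only [hGdef]
    exact intervalIntegral.integral_interval_sub_left ((hgc j).intervalIntegrable _ _)
      ((hgc j).intervalIntegrable _ _)
  -- the moment integral identity
  have hy : ∀ t ∈ Set.Icc t0 t1, (∫ x in xmin..xmax, x ^ 3 * ψ t x)
      = t ^ 3 * A 0 t - 3 * t ^ 2 * A 1 t + 3 * t * A 2 t - A 3 t := by
    intro t htm
    have e1 : (∫ x in xmin..xmax, x ^ 3 * ψ t x)
        = ∫ x in xmin..xmax, (fun s => (t - s) ^ 3 * Φ s) (t - x) := by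
      refine intervalIntegral.integral_congr ?_
      intro x hxm
      have hxm' : x ∈ Set.Icc xmin xmax := by rwa [Set.uIcc_of_le hx.le] at hxm
      simp only
      rw [hΦ t htm x hxm', sub_sub_cancel]
    have e3 : (∫ x in xmin..xmax, (fun s => (t - s) ^ 3 * Φ s) (t - x))
        = ∫ s in (t - xmax)..(t - xmin), (t - s) ^ 3 * Φ s :=
      intervalIntegral.integral_comp_sub_left (fun s => (t - s) ^ 3 * Φ s) t
    rw [e1, e3]
    have e2 : ∀ s : ℝ, (t - s) ^ 3 * Φ s
        = t ^ 3 * g 0 s - 3 * t ^ 2 * g 1 s + 3 * t * g 2 s - g 3 s := by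
      intro s
      rw [hgdef]
      simp only
      ring
    rw [intervalIntegral.integral_congr (g := fun s =>
      t ^ 3 * g 0 s - 3 * t ^ 2 * g 1 s + 3 * t * g 2 s - g 3 s) (fun s _ => e2 s)]
    have i0 : IntervalIntegrable (fun s => t ^ 3 * g 0 s) MeasureTheory.volume
        (t - xmax) (t - xmin) := (Continuous.intervalIntegrable (by fun_prop) _ _)
    have i1 : IntervalIntegrable (fun s => 3 * t ^ 2 * g 1 s) MeasureTheory.volume
        (t - xmax) (t - xmin) := (Continuous.intervalIntegrable (by fun_prop) _ _)
    have i2 : IntervalIntegrable (fun s => 3 * t * g 2 s) MeasureTheory.volume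
        (t - xmax) (t - xmin) := (Continuous.intervalIntegrable (by fun_prop) _ _)
    have i3 : IntervalIntegrable (g 3) MeasureTheory.volume
        (t - xmax) (t - xmin) := (Continuous.intervalIntegrable (hgc 3) _ _)
    rw [intervalIntegral.integral_sub ((i0.sub i1).add i2) i3,
      intervalIntegral.integral_add (i0.sub i1) i2,
      intervalIntegral.integral_sub i0 i1,
      intervalIntegral.integral_const_mul, intervalIntegral.integral_const_mul,
      intervalIntegral.integral_const_mul,
      hAint 0 t, hAint 1 t, hAint 2 t, hAint 3 t]
  -- derivatives of u
  have hUD : UniqueDiffOn ℝ (Set.Icc t0 t1) := uniqueDiffOn_Icc ht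
  set u1 : ℝ → ℝ := derivWithin u (Set.Icc t0 t1) with hu1def
  set u2 : ℝ → ℝ := derivWithin u1 (Set.Icc t0 t1) with hu2def
  set u3 : ℝ → ℝ := derivWithin u2 (Set.Icc t0 t1) with hu3def
  have hcu1 : ContDiffOn ℝ 2 u1 (Set.Icc t0 t1) := hu.derivWithin hUD (by norm_num)
  have hcu2 : ContDiffOn ℝ 1 u2 (Set.Icc t0 t1) := hcu1.derivWithin hUD (by norm_num)
  have hd0 : ∀ t ∈ Set.Icc t0 t1, HasDerivWithinAt u (u1 t) (Set.Icc t0 t1) t := by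
    intro t htm
    exact (hu.differentiableOn (by norm_num) t htm).hasDerivWithinAt
  have hd1 : ∀ t ∈ Set.Icc t0 t1, HasDerivWithinAt u1 (u2 t) (Set.Icc t0 t1) t := by
    intro t htm
    exact (hcu1.differentiableOn (by norm_num) t htm).hasDerivWithinAt
  have hd2 : ∀ t ∈ Set.Icc t0 t1, HasDerivWithinAt u2 (u3 t) (Set.Icc t0 t1) t := by
    intro t htm
    exact (hcu2.differentiableOn (by norm_num) t htm).hasDerivWithinAt
  refine ⟨fun t => xmin ^ 3 * u t + 3 * (t ^ 2 * A 0 t - 2 * t * A 1 t + A 2 t),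
    fun t => xmin ^ 3 * u1 t + 3 * xmin ^ 2 * u t + 6 * (t * A 0 t - A 1 t),
    fun t => xmin ^ 3 * u2 t + 3 * xmin ^ 2 * u1 t + 6 * xmin * u t + 6 * A 0 t,
    ?_, ?_, ?_, ?_⟩
  · -- first derivative
    intro t htm
    have h0 := hA 0 t htm
    have h1 := hA 1 t htm
    have h2 := hA 2 t htm
    have h3 := hA 3 t htm
    have hbig := (((((hasDerivAt_pow 3 t).mul h0).sub
        (((hasDerivAt_pow 2 t).const_mul (3 : ℝ)).mul h1)).add
        (((hasDerivAt_id' t).const_mul (3 : ℝ)).mul h2)).sub h3).hasDerivWithinAt (s := Set.Icc t0 t1)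
    have hgoal := hbig.congr (fun s hs => hy s hs) (hy t htm)
    refine hgoal.congr_deriv ?_
    ring
  · -- second derivative
    intro t htm
    have h0 := (hA 0 t htm).hasDerivWithinAt (s := Set.Icc t0 t1)
    have h1 := (hA 1 t htm).hasDerivWithinAt (s := Set.Icc t0 t1)
    have h2 := (hA 2 t htm).hasDerivWithinAt (s := Set.Icc t0 t1)
    have hbig := (((hd0 t htm).const_mul (xmin ^ 3)).add
      (((((hasDerivAt_pow 2 t).hasDerivWithinAt.mul h0).sub
        (((hasDerivAt_id' t).const_mul (2 : ℝ)).hasDerivWithinAt.mul h1)).add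
        h2).const_mul (3 : ℝ)))
    refine hbig.congr_deriv ?_
    ring
  · -- third derivative
    intro t htm
    have h0 := (hA 0 t htm).hasDerivWithinAt (s := Set.Icc t0 t1)
    have h1 := (hA 1 t htm).hasDerivWithinAt (s := Set.Icc t0 t1)
    have hbig := ((((hd1 t htm).const_mul (xmin ^ 3)).add
      ((hd0 t htm).const_mul (3 * xmin ^ 2))).add
      ((((hasDerivAt_id' t).hasDerivWithinAt.mul h0).sub h1).const_mul (6 : ℝ)))
    refine hbig.congr_deriv ?_
    ring
  · -- fourth derivative
    intro t htm
    have h0 := (hA 0 t htm).hasDerivWithinAt (s := Set.Icc t0 t1)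
    have hbig := (((((hd2 t htm).const_mul (xmin ^ 3)).add
      ((hd1 t htm).const_mul (3 * xmin ^ 2))).add
      ((hd0 t htm).const_mul (6 * xmin))).add (h0.const_mul (6 : ℝ)))
    refine hbig.congr_deriv ?_
    ring
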